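/- The augmented map M(x) = (p_L, h(x), L_f h(x), L_f² h(x)) from ℝ⁴ to ℝ⁴ has nonsingular Jacobian at every point with p_sup − p_L − α·p_lp > 0, T_sup ≠ 0 and x_v ≠ 0. -/

import Mathlib

open ContinuousLinearMap

/-- The augmented map M(x) = (p_L, h, L_f h, L_f² h) : ℝ⁴ → ℝ⁴
has nonsingular Jacobian (nonzero determinant) at every point with
p_sup − p_L − α·p_lp > 0, T_sup ≠ 0 and x_v ≠ 0. -/
theorem stmt7 (T_L T_sup α p_lp : ℝ) (hT : T_sup ≠ 0)
    (M : (Fin 4 → ℝ) → (Fin 4 → ℝ))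
    (hM : M = fun x => ![x 0, x 1,
          T_sup * x 3 * Real.sqrt (x 1 - x 0 - α * p_lp),
          (1/2) * T_sup * (T_sup - T_L) * (x 3)^2
            + T_sup * x 2 * Real.sqrt (x 1 - x 0 - α * p_lp)]) :
    ∀ x : Fin 4 → ℝ, x 1 - x 0 - α * p_lp > 0 → x 3 ≠ 0 →
      LinearMap.det ((fderiv ℝ M x : (Fin 4 → ℝ) →L[ℝ] (Fin 4 → ℝ)) :
        (Fin 4 → ℝ) →ₗ[ℝ] (Fin 4 → ℝ)) ≠ 0 := by
  subst hM
  intro x hx hx3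
  set u : ℝ := x 1 - x 0 - α * p_lp with hu
  set s : ℝ := Real.sqrt u with hs
  have hsne : s ≠ 0 := Real.sqrt_ne_zero'.mpr hx
  -- derivative of the inner linear map
  have hg : HasFDerivAt (fun y : Fin 4 → ℝ => y 1 - y 0 - α * p_lp)
      ((proj 1 : (Fin 4 → ℝ) →L[ℝ] ℝ) - proj 0) x := by
    simpa using (((hasFDerivAt_apply 1 x).sub (hasFDerivAt_apply 0 x)).sub_const (α * p_lp))
  have hsq : HasFDerivAt (fun y : Fin 4 → ℝ => Real.sqrt (y 1 - y 0 - α * p_lp))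
      ((1 / (2 * s)) • ((proj 1 : (Fin 4 → ℝ) →L[ℝ] ℝ) - proj 0)) x :=
    (Real.hasDerivAt_sqrt hx.ne').comp_hasFDerivAt x hg
  have h3 : HasFDerivAt (fun y : Fin 4 → ℝ => y 3)
      (proj 3 : (Fin 4 → ℝ) →L[ℝ] ℝ) x := hasFDerivAt_apply 3 x
  have h2 : HasFDerivAt (fun y : Fin 4 → ℝ => y 2)
      (proj 2 : (Fin 4 → ℝ) →L[ℝ] ℝ) x := hasFDerivAt_apply 2 x
  -- component derivatives
  have hc2 : HasFDerivAt (fun y : Fin 4 → ℝ => T_sup * y 3 * Real.sqrt (y 1 - y 0 - α * p_lp))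
      ((T_sup * x 3) • ((1 / (2 * s)) • ((proj 1 : (Fin 4 → ℝ) →L[ℝ] ℝ) - proj 0))
        + s • (T_sup • (proj 3 : (Fin 4 → ℝ) →L[ℝ] ℝ))) x :=
    (h3.const_mul T_sup).mul hsq
  have hc3 : HasFDerivAt (fun y : Fin 4 → ℝ =>
        (1/2) * T_sup * (T_sup - T_L) * (y 3)^2
          + T_sup * y 2 * Real.sqrt (y 1 - y 0 - α * p_lp))
      (((1/2) * T_sup * (T_sup - T_L)) • ((x 3 • (proj 3 : (Fin 4 → ℝ) →L[ℝ] ℝ) + x 3 • proj 3))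
        + ((T_sup * x 2) • ((1 / (2 * s)) • ((proj 1 : (Fin 4 → ℝ) →L[ℝ] ℝ) - proj 0))
            + s • (T_sup • (proj 2 : (Fin 4 → ℝ) →L[ℝ] ℝ)))) x :=
    by simpa only [pow_two, Pi.add_def, Pi.mul_def, ← hu, ← hs] using (((h3.mul h3).const_mul ((1/2) * T_sup * (T_sup - T_L))).add ((h2.const_mul T_sup).mul hsq))
  -- assemble
  set L : (Fin 4 → ℝ) →L[ℝ] (Fin 4 → ℝ) := ContinuousLinearMap.pi
    ![ (proj 0 : (Fin 4 → ℝ) →L[ℝ] ℝ), proj 1,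
       (T_sup * x 3) • ((1 / (2 * s)) • ((proj 1 : (Fin 4 → ℝ) →L[ℝ] ℝ) - proj 0))
        + s • (T_sup • (proj 3 : (Fin 4 → ℝ) →L[ℝ] ℝ)),
       ((1/2) * T_sup * (T_sup - T_L)) • ((x 3 • (proj 3 : (Fin 4 → ℝ) →L[ℝ] ℝ) + x 3 • proj 3))
        + ((T_sup * x 2) • ((1 / (2 * s)) • ((proj 1 : (Fin 4 → ℝ) →L[ℝ] ℝ) - proj 0))
            + s • (T_sup • (proj 2 : (Fin 4 → ℝ) →L[ℝ] ℝ))) ] with hL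
  have hF : HasFDerivAt (fun y : Fin 4 → ℝ => ![y 0, y 1,
          T_sup * y 3 * Real.sqrt (y 1 - y 0 - α * p_lp),
          (1/2) * T_sup * (T_sup - T_L) * (y 3)^2
            + T_sup * y 2 * Real.sqrt (y 1 - y 0 - α * p_lp)]) L x := by
    rw [hL]
    apply hasFDerivAt_pi.mpr
    intro i
    fin_cases i <;> simp only [Matrix.cons_val_zero, Matrix.cons_val_one, Matrix.head_cons,
      Matrix.cons_val_two, Matrix.tail_cons, Matrix.cons_val_three, Fin.isValue]
    · exact hasFDerivAt_apply 0 x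
    · exact hasFDerivAt_apply 1 x
    · exact hc2
    · exact hc3
  rw [hF.fderiv]
  rw [← LinearMap.det_toMatrix' (L : (Fin 4 → ℝ) →ₗ[ℝ] (Fin 4 → ℝ))]
  have hmat : LinearMap.toMatrix' (L : (Fin 4 → ℝ) →ₗ[ℝ] (Fin 4 → ℝ)) =
      !![1, 0, 0, 0;
         0, 1, 0, 0;
         -(T_sup * x 3) * (1 / (2 * s)), (T_sup * x 3) * (1 / (2 * s)), 0, s * T_sup;
         -(T_sup * x 2) * (1 / (2 * s)), (T_sup * x 2) * (1 / (2 * s)) + 0, s * T_sup,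
           (1/2) * T_sup * (T_sup - T_L) * (2 * x 3)] := by
    ext i j
    fin_cases i <;> fin_cases j <;>
      simp [hL, LinearMap.toMatrix'_apply, Pi.single, Function.update] <;> ring
  rw [hmat]
  have hdet : (!![(1:ℝ), 0, 0, 0;
         0, 1, 0, 0;
         -(T_sup * x 3) * (1 / (2 * s)), (T_sup * x 3) * (1 / (2 * s)), 0, s * T_sup;
         -(T_sup * x 2) * (1 / (2 * s)), (T_sup * x 2) * (1 / (2 * s)) + 0, s * T_sup,
           (1/2) * T_sup * (T_sup - T_L) * (2 * x 3)]).det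
      = -((s * T_sup) * (s * T_sup)) := by
    simp [Matrix.det_succ_row_zero, Fin.sum_univ_succ]
  rw [hdet]
  exact neg_ne_zero.mpr (mul_ne_zero (mul_ne_zero hsne hT) (mul_ne_zero hsne hT))
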